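/- A scalar matrix that is diagonally dominant by columns remains diagonally dominant by columns after one step of Gaussian elimination without pivoting, and the largest absolute entry at most doubles over the whole elimination (growth factor at most 2). -/

import Mathlib

lemma aux_step {n : ℕ} (B : ℕ → Matrix (Fin (n+1)) (Fin (n+1)) ℝ)
    (hstep : ∀ (k : ℕ) (hk : k < n+1) (i j : Fin (n+1)),
      B (k+1) i j = if k < i.val ∧ k < j.val then
        B k i j - B k i ⟨k,hk⟩ * B k ⟨k,hk⟩ j / B k ⟨k,hk⟩ ⟨k,hk⟩ else B k i j)
    (k : ℕ) (hk : k < n+1)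
    (hdom : ∀ j : Fin (n+1), k ≤ j.val →
      ∑ i ∈ Finset.univ.filter (fun i : Fin (n+1) => k ≤ i.val ∧ i ≠ j), |B k i j| ≤ |B k j j|) :
    (∀ j : Fin (n+1), k+1 ≤ j.val →
      ∑ i ∈ Finset.univ.filter (fun i : Fin (n+1) => k+1 ≤ i.val ∧ i ≠ j), |B (k+1) i j|
        ≤ |B (k+1) j j|)
    ∧ (∀ j : Fin (n+1), k+1 ≤ j.val →
      ∑ i ∈ Finset.univ.filter (fun i : Fin (n+1) => k+1 ≤ i.val), |B (k+1) i j|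
        ≤ ∑ i ∈ Finset.univ.filter (fun i : Fin (n+1) => k ≤ i.val), |B k i j|) := by
  have hsetK : Finset.univ.filter (fun i : Fin (n+1) => k ≤ i.val ∧ i ≠ ⟨k,hk⟩)
      = Finset.univ.filter (fun i : Fin (n+1) => k+1 ≤ i.val) := by
    ext i
    simp only [Finset.mem_filter, Finset.mem_univ, true_and, ne_eq, Fin.ext_iff]
    omega
  have colk : ∑ i ∈ Finset.univ.filter (fun i : Fin (n+1) => k+1 ≤ i.val), |B k i ⟨k,hk⟩|
      ≤ |B k ⟨k,hk⟩ ⟨k,hk⟩| := by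
    have h := hdom ⟨k,hk⟩ le_rfl
    rwa [hsetK] at h
  by_cases hd : B k ⟨k,hk⟩ ⟨k,hk⟩ = 0
  · have hcz : ∀ i : Fin (n+1), k < i.val → B k i ⟨k,hk⟩ = 0 := by
      intro i hi
      have hnn : ∀ x ∈ Finset.univ.filter (fun i : Fin (n+1) => k+1 ≤ i.val),
          (0:ℝ) ≤ |B k x ⟨k,hk⟩| := fun x _ => abs_nonneg _
      have h0 : ∑ i ∈ Finset.univ.filter (fun i : Fin (n+1) => k+1 ≤ i.val), |B k i ⟨k,hk⟩| = 0 := by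
        have h := colk
        rw [hd, abs_zero] at h
        exact le_antisymm h (Finset.sum_nonneg hnn)
      have h1 := (Finset.sum_eq_zero_iff_of_nonneg hnn).mp h0 i (by simp only [Finset.mem_filter, Finset.mem_univ, true_and]; omega)
      exact abs_eq_zero.mp h1
    have heq : ∀ i j : Fin (n+1), B (k+1) i j = B k i j := by
      intro i j
      rw [hstep k hk]
      split
      · next h => rw [hcz i h.1, zero_mul, zero_div, sub_zero]
      · rfl
    constructor
    · intro j hj
      simp only [heq]
      refine le_trans (Finset.sum_le_sum_of_subset_of_nonneg ?_ ?_) (hdom j (by omega))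
      · intro i hi
        simp only [Finset.mem_filter, Finset.mem_univ, true_and] at hi ⊢
        exact ⟨by omega, hi.2⟩
      · intro i _ _; exact abs_nonneg _
    · intro j hj
      simp only [heq]
      refine Finset.sum_le_sum_of_subset_of_nonneg ?_ ?_
      · intro i hi
        simp only [Finset.mem_filter, Finset.mem_univ, true_and] at hi ⊢
        omega
      · intro i _ _; exact abs_nonneg _
  · have hda : (0:ℝ) < |B k ⟨k,hk⟩ ⟨k,hk⟩| := abs_pos.mpr hd
    have hdne : |B k ⟨k,hk⟩ ⟨k,hk⟩| ≠ 0 := ne_of_gt hda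
    have hpt : ∀ j i : Fin (n+1), k < i.val → k < j.val →
        |B (k+1) i j| ≤ |B k i j| + |B k i ⟨k,hk⟩| * (|B k ⟨k,hk⟩ j| / |B k ⟨k,hk⟩ ⟨k,hk⟩|) := by
      intro j i hi hj
      rw [hstep k hk, if_pos ⟨hi, hj⟩]
      refine le_trans (abs_sub _ _) ?_
      rw [abs_div, abs_mul, mul_div_assoc]
    constructor
    · intro j hj
      have hsplit2 : Finset.univ.filter (fun i : Fin (n+1) => k ≤ i.val ∧ i ≠ j)
          = insert ⟨k,hk⟩ (Finset.univ.filter (fun i : Fin (n+1) => k+1 ≤ i.val ∧ i ≠ j)) := by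
        ext i
        simp only [Finset.mem_filter, Finset.mem_insert, Finset.mem_univ, true_and, ne_eq,
          Fin.ext_iff]
        omega
      have hK2 : (⟨k,hk⟩ : Fin (n+1)) ∉
          Finset.univ.filter (fun i : Fin (n+1) => k+1 ≤ i.val ∧ i ≠ j) := by
        simp
      have hsplit3 : Finset.univ.filter (fun i : Fin (n+1) => k+1 ≤ i.val)
          = insert j (Finset.univ.filter (fun i : Fin (n+1) => k+1 ≤ i.val ∧ i ≠ j)) := by
        ext i
        simp only [Finset.mem_filter, Finset.mem_insert, Finset.mem_univ, true_and, ne_eq,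
          Fin.ext_iff]
        omega
      have hj3 : j ∉ Finset.univ.filter (fun i : Fin (n+1) => k+1 ≤ i.val ∧ i ≠ j) := by simp
      have b1 : ∑ i ∈ Finset.univ.filter (fun i : Fin (n+1) => k+1 ≤ i.val ∧ i ≠ j), |B k i j|
          ≤ |B k j j| - |B k ⟨k,hk⟩ j| := by
        have h := hdom j (by omega)
        rw [hsplit2, Finset.sum_insert hK2] at h
        linarith
      have b2 : ∑ i ∈ Finset.univ.filter (fun i : Fin (n+1) => k+1 ≤ i.val ∧ i ≠ j),
          |B k i ⟨k,hk⟩| ≤ |B k ⟨k,hk⟩ ⟨k,hk⟩| - |B k j ⟨k,hk⟩| := by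
        have h := colk
        rw [hsplit3, Finset.sum_insert hj3] at h
        linarith
      have tnn : (0:ℝ) ≤ |B k ⟨k,hk⟩ j| / |B k ⟨k,hk⟩ ⟨k,hk⟩| := by positivity
      calc ∑ i ∈ Finset.univ.filter (fun i : Fin (n+1) => k+1 ≤ i.val ∧ i ≠ j), |B (k+1) i j|
          ≤ ∑ i ∈ Finset.univ.filter (fun i : Fin (n+1) => k+1 ≤ i.val ∧ i ≠ j),
              (|B k i j| + |B k i ⟨k,hk⟩| * (|B k ⟨k,hk⟩ j| / |B k ⟨k,hk⟩ ⟨k,hk⟩|)) := by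
            refine Finset.sum_le_sum ?_
            intro i hi
            simp only [Finset.mem_filter] at hi
            exact hpt j i (by omega) (by omega)
        _ = (∑ i ∈ Finset.univ.filter (fun i : Fin (n+1) => k+1 ≤ i.val ∧ i ≠ j), |B k i j|)
              + (∑ i ∈ Finset.univ.filter (fun i : Fin (n+1) => k+1 ≤ i.val ∧ i ≠ j),
                  |B k i ⟨k,hk⟩|) * (|B k ⟨k,hk⟩ j| / |B k ⟨k,hk⟩ ⟨k,hk⟩|) := by
            rw [Finset.sum_add_distrib, ← Finset.sum_mul]
        _ ≤ (|B k j j| - |B k ⟨k,hk⟩ j|)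
              + (|B k ⟨k,hk⟩ ⟨k,hk⟩| - |B k j ⟨k,hk⟩|)
                * (|B k ⟨k,hk⟩ j| / |B k ⟨k,hk⟩ ⟨k,hk⟩|) :=
            add_le_add b1 (mul_le_mul_of_nonneg_right b2 tnn)
        _ = |B k j j| - |B k j ⟨k,hk⟩| * |B k ⟨k,hk⟩ j| / |B k ⟨k,hk⟩ ⟨k,hk⟩| := by
            field_simp
            ring
        _ ≤ |B (k+1) j j| := by
            rw [hstep k hk, if_pos ⟨(by omega : k < j.val), (by omega : k < j.val)⟩]
            have h2 := abs_sub_abs_le_abs_sub (B k j j)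
              (B k j ⟨k,hk⟩ * B k ⟨k,hk⟩ j / B k ⟨k,hk⟩ ⟨k,hk⟩)
            rw [abs_div, abs_mul] at h2
            linarith
    · intro j hj
      have hsplit1 : Finset.univ.filter (fun i : Fin (n+1) => k ≤ i.val)
          = insert ⟨k,hk⟩ (Finset.univ.filter (fun i : Fin (n+1) => k+1 ≤ i.val)) := by
        ext i
        simp only [Finset.mem_filter, Finset.mem_insert, Finset.mem_univ, true_and, Fin.ext_iff]
        omega
      have hK1 : (⟨k,hk⟩ : Fin (n+1)) ∉
          Finset.univ.filter (fun i : Fin (n+1) => k+1 ≤ i.val) := by simp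
      have tnn : (0:ℝ) ≤ |B k ⟨k,hk⟩ j| / |B k ⟨k,hk⟩ ⟨k,hk⟩| := by positivity
      calc ∑ i ∈ Finset.univ.filter (fun i : Fin (n+1) => k+1 ≤ i.val), |B (k+1) i j|
          ≤ ∑ i ∈ Finset.univ.filter (fun i : Fin (n+1) => k+1 ≤ i.val),
              (|B k i j| + |B k i ⟨k,hk⟩| * (|B k ⟨k,hk⟩ j| / |B k ⟨k,hk⟩ ⟨k,hk⟩|)) := by
            refine Finset.sum_le_sum ?_
            intro i hi
            simp only [Finset.mem_filter] at hi
            exact hpt j i (by omega) (by omega)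
        _ = (∑ i ∈ Finset.univ.filter (fun i : Fin (n+1) => k+1 ≤ i.val), |B k i j|)
              + (∑ i ∈ Finset.univ.filter (fun i : Fin (n+1) => k+1 ≤ i.val), |B k i ⟨k,hk⟩|)
                * (|B k ⟨k,hk⟩ j| / |B k ⟨k,hk⟩ ⟨k,hk⟩|) := by
            rw [Finset.sum_add_distrib, ← Finset.sum_mul]
        _ ≤ (∑ i ∈ Finset.univ.filter (fun i : Fin (n+1) => k+1 ≤ i.val), |B k i j|)
              + |B k ⟨k,hk⟩ ⟨k,hk⟩| * (|B k ⟨k,hk⟩ j| / |B k ⟨k,hk⟩ ⟨k,hk⟩|) := by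
            have h := mul_le_mul_of_nonneg_right colk tnn
            linarith
        _ = (∑ i ∈ Finset.univ.filter (fun i : Fin (n+1) => k+1 ≤ i.val), |B k i j|)
              + |B k ⟨k,hk⟩ j| := by
            rw [mul_comm, div_mul_cancel₀ _ hdne]
        _ = ∑ i ∈ Finset.univ.filter (fun i : Fin (n+1) => k ≤ i.val), |B k i j| := by
            rw [hsplit1, Finset.sum_insert hK1, add_comm]

/-- A scalar matrix that is diagonally dominant by columns stays diagonally dominant by
columns after one step of Gaussian elimination without pivoting, and the largest absolute
entry at most doubles over the whole elimination (growth factor at most 2). -/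
theorem diag_dominant_growth_two
    {n : ℕ}
    (A : Matrix (Fin (n + 1)) (Fin (n + 1)) ℝ)
    (hdd : ∀ j, ∑ i ∈ Finset.univ.filter (fun i => i ≠ j), |A i j| ≤ |A j j|)
    (h11 : A 0 0 ≠ 0)
    (B : ℕ → Matrix (Fin (n + 1)) (Fin (n + 1)) ℝ)
    (hB0 : B 0 = A)
    (hupd : ∀ k : Fin (n + 1), ∀ i j : Fin (n + 1),
      B (k.val + 1) i j =
        if k < i ∧ k < j then
          B k.val i j - B k.val i k * B k.val k j / B k.val k k
        else B k.val i j) :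
    (∀ j : Fin n,
      ∑ i ∈ Finset.univ.filter (fun i => i ≠ j),
          |A i.succ j.succ - A i.succ 0 * A 0 j.succ / A 0 0|
        ≤ |A j.succ j.succ - A j.succ 0 * A 0 j.succ / A 0 0|) ∧
    (∀ k : ℕ, k ≤ n + 1 → ∀ i j : Fin (n + 1),
      |B k i j| ≤ 2 * ⨆ p : Fin (n + 1) × Fin (n + 1), |A p.1 p.2|) := by
  have hstep : ∀ (k : ℕ) (hk : k < n+1) (i j : Fin (n+1)),
      B (k+1) i j = if k < i.val ∧ k < j.val then
        B k i j - B k i ⟨k,hk⟩ * B k ⟨k,hk⟩ j / B k ⟨k,hk⟩ ⟨k,hk⟩ else B k i j := by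
    intro k hk i j
    simpa [Fin.lt_def] using hupd ⟨k,hk⟩ i j
  have key : ∀ k : ℕ, k ≤ n+1 →
      (∀ j : Fin (n+1), k ≤ j.val →
        ∑ i ∈ Finset.univ.filter (fun i : Fin (n+1) => k ≤ i.val ∧ i ≠ j), |B k i j|
          ≤ |B k j j|)
      ∧ (∀ j : Fin (n+1), k ≤ j.val →
        ∑ i ∈ Finset.univ.filter (fun i : Fin (n+1) => k ≤ i.val), |B k i j|
          ≤ ∑ i, |A i j|) := by
    intro k
    induction k with
    | zero =>
      intro _
      constructor
      · intro j _
        have he : Finset.univ.filter (fun i : Fin (n+1) => 0 ≤ i.val ∧ i ≠ j)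
            = Finset.univ.filter (fun i : Fin (n+1) => i ≠ j) := by
          ext i; simp
        rw [hB0, he]
        exact hdd j
      · intro j _
        have he : Finset.univ.filter (fun i : Fin (n+1) => 0 ≤ i.val) = Finset.univ := by
          ext i; simp
        rw [hB0, he]
    | succ k ih =>
      intro hk1
      have hk : k < n+1 := by omega
      obtain ⟨ih1, ih2⟩ := ih (by omega)
      obtain ⟨s1, s2⟩ := aux_step B hstep k hk ih1
      exact ⟨s1, fun j hj => le_trans (s2 j hj) (ih2 j (by omega))⟩
  have hfreeze : ∀ (i j : Fin (n+1)) (k : ℕ), k ≤ n+1 → min i.val j.val ≤ k →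
      B k i j = B (min i.val j.val) i j := by
    intro i j k
    induction k with
    | zero =>
      intro _ hm
      have h0 : min i.val j.val = 0 := by omega
      rw [h0]
    | succ k ih =>
      intro hk hm
      rcases Nat.lt_or_ge k (min i.val j.val) with h | h
      · have h0 : min i.val j.val = k+1 := by omega
        rw [h0]
      · rw [hstep k (by omega), if_neg (by omega), ih (by omega) h]
  have hMle : ∀ i j : Fin (n+1), |A i j| ≤ ⨆ p : Fin (n+1) × Fin (n+1), |A p.1 p.2| := by
    intro i j
    exact le_ciSup (Finite.bddAbove_range fun p : Fin (n+1) × Fin (n+1) => |A p.1 p.2|) (i, j)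
  have hcol : ∀ j : Fin (n+1), ∑ i, |A i j|
      ≤ 2 * ⨆ p : Fin (n+1) × Fin (n+1), |A p.1 p.2| := by
    intro j
    have h1 : |A j j| + ∑ i ∈ Finset.univ.filter (fun i => i ≠ j), |A i j| = ∑ i, |A i j| := by
      rw [Finset.filter_ne']
      exact Finset.add_sum_erase Finset.univ (fun i => |A i j|) (Finset.mem_univ j)
    have h2 := hdd j
    have h3 := hMle j j
    linarith
  have hbound : ∀ k : ℕ, k ≤ n+1 → ∀ i j : Fin (n+1), k ≤ i.val → k ≤ j.val →
      |B k i j| ≤ 2 * ⨆ p : Fin (n+1) × Fin (n+1), |A p.1 p.2| := by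
    intro k hk i j hi hj
    have h1 : |B k i j| ≤ ∑ i' ∈ Finset.univ.filter (fun i' : Fin (n+1) => k ≤ i'.val),
        |B k i' j| := by
      refine Finset.single_le_sum (f := fun i' => |B k i' j|) (fun _ _ => abs_nonneg _) ?_
      simp [Finset.mem_filter, hi]
    exact le_trans h1 (le_trans ((key k hk).2 j hj) (hcol j))
  constructor
  · intro j
    have h0 : (⟨0, Nat.succ_pos n⟩ : Fin (n+1)) = 0 := by
      ext; simp
    have h1 : ∀ i jj : Fin (n+1), 0 < i.val → 0 < jj.val →
        B 1 i jj = A i jj - A i 0 * A 0 jj / A 0 0 := by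
      intro i jj hi hjj
      have h2 := hstep 0 (Nat.succ_pos n) i jj
      rw [if_pos (⟨hi, hjj⟩ : 0 < i.val ∧ 0 < jj.val), hB0, h0] at h2
      exact h2
    have hkey := (key 1 (by omega)).1 (Fin.succ j) (Nat.succ_le_succ (Nat.zero_le _))
    have hL : ∑ i ∈ Finset.univ.filter (fun i : Fin n => i ≠ j),
        |A i.succ j.succ - A i.succ 0 * A 0 j.succ / A 0 0|
        = ∑ i ∈ Finset.univ.filter (fun i : Fin (n+1) => 1 ≤ i.val ∧ i ≠ Fin.succ j),
          |B 1 i (Fin.succ j)| := by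
      rw [Finset.sum_filter, Finset.sum_filter, Fin.sum_univ_succ]
      rw [if_neg (by simp)]
      rw [zero_add]
      refine Finset.sum_congr rfl ?_
      intro i _
      have hs : (1 ≤ (Fin.succ i).val ∧ Fin.succ i ≠ Fin.succ j) ↔ i ≠ j := by
        simp [Fin.val_succ]
      by_cases hij : i ≠ j
      · rw [if_pos hij, if_pos (hs.mpr hij),
          h1 i.succ j.succ (Nat.succ_pos _) (Nat.succ_pos _)]
      · rw [if_neg hij, if_neg (fun hc => hij (hs.mp hc))]
    rw [hL, ← h1 (Fin.succ j) (Fin.succ j) (Nat.succ_pos _) (Nat.succ_pos _)]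
    exact hkey
  · intro k hk i j
    rcases le_or_gt k (min i.val j.val) with h | h
    · exact hbound k hk i j (le_trans h (Nat.min_le_left _ _)) (le_trans h (Nat.min_le_right _ _))
    · rw [hfreeze i j k hk (le_of_lt h)]
      exact hbound (min i.val j.val) (by have := i.isLt; omega) i j
        (Nat.min_le_left _ _) (Nat.min_le_right _ _)
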